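/- Let M = [[1,0,0],[x,1,0],[z,y,1]] be a lower unitriangular 3×3 complex matrix with z ≠ 0 and xy - z ≠ 0, and let M̃ = [[1, y/(xy-z), 1/z],[0,1,x/z],[0,0,1]]. Then M·B⁺·M⁻¹ = M̃·B⁻·M̃⁻¹, where B⁺ (resp. B⁻) is the Borel subgroup of upper (resp. lower) triangular matrices in GL₃(ℂ). -/

import Mathlib

open Matrix

/-- The set of invertible upper triangular 3×3 complex matrices (Borel `B⁺`). -/
def Bplus : Set (Matrix (Fin 3) (Fin 3) ℂ) :=
  {b | IsUnit b.det ∧ ∀ i j : Fin 3, (j : ℕ) < (i : ℕ) → b i j = 0}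

/-- The set of invertible lower triangular 3×3 complex matrices (Borel `B⁻`). -/
def Bminus : Set (Matrix (Fin 3) (Fin 3) ℂ) :=
  {b | IsUnit b.det ∧ ∀ i j : Fin 3, (i : ℕ) < (j : ℕ) → b i j = 0}

set_option maxHeartbeats 2000000
theorem stmt3 (x y z : ℂ) (hz : z ≠ 0) (hxyz : x * y - z ≠ 0) :
    (fun b => !![1, 0, 0; x, 1, 0; z, y, 1] * b * (!![1, 0, 0; x, 1, 0; z, y, 1])⁻¹) '' Bplus =
    (fun b => !![1, y/(x*y - z), 1/z; 0, 1, x/z; 0, 0, 1] * b *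
        (!![1, y/(x*y - z), 1/z; 0, 1, x/z; 0, 0, 1])⁻¹) '' Bminus := by
  set M : Matrix (Fin 3) (Fin 3) ℂ := !![1, 0, 0; x, 1, 0; z, y, 1] with hM
  set N : Matrix (Fin 3) (Fin 3) ℂ := !![1, y/(x*y - z), 1/z; 0, 1, x/z; 0, 0, 1] with hN
  set A : Matrix (Fin 3) (Fin 3) ℂ :=
    !![0, 0, 1/(x*y - z); 0, (z - x*y)/z, -x/z; z, y, 1] with hA
  set A' : Matrix (Fin 3) (Fin 3) ℂ :=
    !![1, y/(x*y - z), 1/z; -x, -z/(x*y - z), 0; x*y - z, 0, 0] with hA'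
  have hAA' : A * A' = 1 := by
    ext i j
    fin_cases i <;> fin_cases j <;>
      simp [hA, hA', Matrix.mul_apply, Fin.sum_univ_three, Matrix.one_apply,
        Matrix.vecHead, Matrix.vecTail] <;>
      (try field_simp) <;> ring
  have hA'A : A' * A = 1 := mul_eq_one_comm.mp hAA'
  have hAinv : A⁻¹ = A' := Matrix.inv_eq_right_inv hAA'
  have hMN : M = N * A := by
    ext i j
    fin_cases i <;> fin_cases j <;>
      simp [hM, hN, hA, Matrix.mul_apply, Fin.sum_univ_three,
        Matrix.vecHead, Matrix.vecTail] <;>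
      (try field_simp [show y * x - z ≠ 0 by rwa [mul_comm]]) <;> ring
  have hdet : A.det * A'.det = 1 := by
    rw [← Matrix.det_mul, hAA', Matrix.det_one]
  ext G
  constructor
  · rintro ⟨b, hb, rfl⟩
    refine ⟨A * b * A', ⟨?_, ?_⟩, ?_⟩
    · have h : (A * b * A').det = b.det * (A.det * A'.det) := by
        rw [Matrix.det_mul, Matrix.det_mul]; ring
      rw [h, hdet, mul_one]; exact hb.1
    · have h10 := hb.2 1 0 (by norm_num)
      have h20 := hb.2 2 0 (by norm_num)
      have h21 := hb.2 2 1 (by norm_num)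
      intro i j hij
      rw [Matrix.eta_fin_three b, h10, h20, h21]
      fin_cases i <;> fin_cases j <;>
        (try (exfalso; revert hij; decide)) <;>
        simp [hA, hA', Matrix.mul_apply, Fin.sum_univ_three,
          Matrix.vecHead, Matrix.vecTail] <;>
        (try field_simp) <;> ring
    · show N * (A * b * A') * N⁻¹ = M * b * M⁻¹
      rw [hMN, Matrix.mul_inv_rev, hAinv]
      simp only [Matrix.mul_assoc]
  · rintro ⟨c, hc, rfl⟩
    refine ⟨A' * c * A, ⟨?_, ?_⟩, ?_⟩
    · have h : (A' * c * A).det = c.det * (A.det * A'.det) := by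
        rw [Matrix.det_mul, Matrix.det_mul]; ring
      rw [h, hdet, mul_one]; exact hc.1
    · have h01 := hc.2 0 1 (by norm_num)
      have h02 := hc.2 0 2 (by norm_num)
      have h12 := hc.2 1 2 (by norm_num)
      intro i j hij
      rw [Matrix.eta_fin_three c, h01, h02, h12]
      fin_cases i <;> fin_cases j <;>
        (try (exfalso; revert hij; decide)) <;>
        simp [hA, hA', Matrix.mul_apply, Fin.sum_univ_three,
          Matrix.vecHead, Matrix.vecTail] <;>
        (try field_simp) <;> ring
    · show M * (A' * c * A) * M⁻¹ = N * c * N⁻¹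
      have key : A * (A' * c * A) * A' = c := by
        simp only [← Matrix.mul_assoc]
        rw [hAA', Matrix.one_mul, Matrix.mul_assoc, hAA', Matrix.mul_one]
      conv_rhs => rw [← key]
      rw [hMN, Matrix.mul_inv_rev, hAinv]
      simp only [Matrix.mul_assoc]
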